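/- The language L = Σ*abΣ* over Σ = {a,b} has exactly 281 minimal atomic NFAs: its atoms are A = Σ*abΣ*, B = b*ba*, C = a*, every atomic NFA of L has at least 3 states, and there are exactly 281 NFAs with 3 states, represented as in the Legality characterization by a collection 𝒞 of three distinct non-empty sets of atoms of L together with a transition function β, an initial collection 𝒞_I and a final collection 𝒞_F satisfying conditions (1) S(𝒞_I) = {A} (the set of initial atoms), (2) S(β(B_i,a)) = α(B_i,a) for every state B_i and letter a, and (3) B_i ∈ 𝒞_F iff C ∈ B_i, each of which is a reduced atomic NFA accepting L. -/

import Mathlib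

/-! Basic definitions: left quotients, atoms, and operations on finite automata. -/

/-- The left quotient of a language `L` by a word `w`: `w⁻¹L = {x | w ++ x ∈ L}`. -/
def leftQuot {α : Type} (L : Language α) (w : List α) : Language α := {x | w ++ x ∈ L}

/-- The set of all left quotients of `L`. -/
def quots {α : Type} (L : Language α) : Set (Language α) := {K | ∃ w : List α, K = leftQuot L w}

/-- `A` is an atom of `L`: a non-empty intersection `K̃_0 ∩ ⋯ ∩ K̃_{n−1}` where each `K̃_i` is a
quotient `K_i` of `L` or its complement (`S` is the set of uncomplemented quotients, so a word is
in the intersection iff it belongs exactly to the quotients in `S`). -/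
def IsAtomOf {α : Type} (L A : Language α) : Prop :=
  (∃ x, x ∈ A) ∧ ∃ S : Set (Language α), S ⊆ quots L ∧
    A = {x | ∀ K ∈ quots L, (x ∈ K ↔ K ∈ S)}

/-- A positive atom: at least one term of its defining intersection is uncomplemented,
equivalently the atom is contained in some quotient of `L`. -/
def IsPositiveAtomOf {α : Type} (L A : Language α) : Prop :=
  IsAtomOf L A ∧ ∃ K ∈ quots L, ∀ x ∈ A, x ∈ K

namespace NFA

/-- The right language of a state `q`: words accepted starting from `q`. -/
def rightLang {α σ : Type} (M : NFA α σ) (q : σ) : Language α :=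
  {w | ∃ p ∈ M.accept, p ∈ M.evalFrom {q} w}

/-- The left language of a state `q`: words leading from the initial states to `q`. -/
def leftLang {α σ : Type} (M : NFA α σ) (q : σ) : Language α :=
  {w | q ∈ M.eval w}

/-- An NFA is trim if every state has a non-empty left language and right language. -/
def IsTrim {α σ : Type} (M : NFA α σ) : Prop :=
  ∀ q, (∃ w, w ∈ M.leftLang q) ∧ (∃ w, w ∈ M.rightLang q)

/-- An NFA is reduced if distinct states have distinct right languages. -/
def IsReduced {α σ : Type} (M : NFA α σ) : Prop :=
  ∀ q p, M.rightLang q = M.rightLang p → q = p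

/-- An NFA is atomic if the right language of every state is a union of positive atoms of the
accepted language. -/
def IsAtomic {α σ : Type} (M : NFA α σ) : Prop :=
  ∀ q, ∃ 𝒜 : Set (Language α), (∀ A ∈ 𝒜, IsPositiveAtomOf M.accepts A) ∧
    M.rightLang q = {w | ∃ A ∈ 𝒜, w ∈ A}

/-- Reversal of an NFA: interchange initial and final states and reverse all transitions. -/
def rev {α σ : Type} (M : NFA α σ) : NFA α σ :=
  ⟨fun q a => {p | q ∈ M.step p a}, M.accept, M.start⟩

/-- States of the determinization of an NFA: the subsets of states reachable from the initial
subset. -/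
def detStates {α σ : Type} (M : NFA α σ) : Type := {S : Set σ // ∃ w, M.eval w = S}

instance {α σ : Type} [Finite σ] (M : NFA α σ) : Finite M.detStates :=
  Subtype.finite

/-- Determinization of an NFA by the subset construction, keeping only the subsets reachable
from the initial subset. -/
def det {α σ : Type} (M : NFA α σ) : DFA α M.detStates where
  step S a := ⟨M.stepSet S.1 a, by
    obtain ⟨w, hw⟩ := S.2
    exact ⟨w ++ [a], by rw [NFA.eval_append_singleton, hw]⟩⟩
  start := ⟨M.start, [], rfl⟩
  accept := {S | ∃ p ∈ M.accept, p ∈ S.1}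

end NFA

/-- Reversal of a DFA, yielding an NFA. -/
def DFA.rev {α σ : Type} (M : DFA α σ) : NFA α σ :=
  ⟨fun q a => {p | M.step p a = q}, M.accept, {M.start}⟩

/-- A DFA is minimal if no DFA accepting the same language has fewer states. -/
def DFA.IsMinimal {α σ : Type} (M : DFA α σ) : Prop :=
  ∀ (σ' : Type) (_ : Finite σ') (M' : DFA α σ'), M'.accepts = M.accepts →
    Nat.card σ ≤ Nat.card σ'

/-- The atom `A = Σ*abΣ*` of `Σ*abΣ*` (with `a = 0`, `b = 1`). -/
def LA : Language (Fin 2) := {w | [0, 1] <:+: w}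

/-- The atom `B = b*ba*`. -/
def LB : Language (Fin 2) := {w | ∃ m n : ℕ, w = List.replicate (m + 1) 1 ++ List.replicate n 0}

/-- The atom `C = a*` (the final atom). -/
def LC : Language (Fin 2) := {w | ∃ n : ℕ, w = List.replicate n 0}

/-- The set of atoms of `Σ*abΣ*`. -/
def atomSet3 : Set (Language (Fin 2)) := {LA, LB, LC}

/-- The átomaton transition relation `α` on the atoms: `Y ∈ alphaStep X x` iff `Y` is an atom
with `x·Y ⊆ X`. -/
def alphaStep (X : Language (Fin 2)) (x : Fin 2) : Set (Language (Fin 2)) :=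
  {Y | Y ∈ atomSet3 ∧ ∀ w ∈ Y, x :: w ∈ X}

/-- `alphaStep` extended to sets of atoms. -/
def alphaStepSet (S : Set (Language (Fin 2))) (x : Fin 2) : Set (Language (Fin 2)) :=
  ⋃ X ∈ S, alphaStep X x

/-- A 3-state NFA for `Σ*abΣ*` as in the Legality characterization: a collection `states` of
three distinct non-empty sets of atoms, a transition function `step` (defined on the states and
trivial elsewhere), an initial collection `start` and a final collection `accept`, satisfying
(1) the union of the initial collection is `{A}`, the set of initial atoms; (2)
`S(β(B_i, x)) = α(B_i, x)` for every state `B_i` and letter `x`; (3) a state is final iff it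
contains the final atom `C`. -/
structure Legal3NFA where
  states : Set (Set (Language (Fin 2)))
  step : Set (Language (Fin 2)) → Fin 2 → Set (Set (Language (Fin 2)))
  start : Set (Set (Language (Fin 2)))
  accept : Set (Set (Language (Fin 2)))
  card_states : states.ncard = 3
  states_atoms : ∀ S ∈ states, S.Nonempty ∧ S ⊆ atomSet3
  step_mem : ∀ S x, step S x ⊆ states
  step_out : ∀ S ∉ states, ∀ x, step S x = ∅
  start_sub : start ⊆ states
  accept_sub : accept ⊆ states
  cond_init : (⋃ S ∈ start, S) = {LA}
  cond_step : ∀ S ∈ states, ∀ x, (⋃ T ∈ step S x, T) = alphaStepSet S x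
  cond_fin : ∀ S ∈ states, (S ∈ accept ↔ LC ∈ S)

/-- The NFA determined by a `Legal3NFA`. -/
def Legal3NFA.toNFA (N : Legal3NFA) : NFA (Fin 2) {S // S ∈ N.states} where
  step S x := {T | T.1 ∈ N.step S.1 x}
  start := {S | S.1 ∈ N.start}
  accept := {S | S.1 ∈ N.accept}

-- ############ Section 1
lemma fin2_cases (c : Fin 2) : c = 0 ∨ c = 1 := by omega
lemma LA_cons {a : Fin 2} {x : List (Fin 2)} :
    a :: x ∈ LA ↔ (a = 0 ∧ ∃ t, x = 1 :: t) ∨ x ∈ LA := by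
  show [0,1] <:+: a :: x ↔ _
  rw [List.infix_cons_iff, List.cons_prefix_cons]
  constructor
  · rintro (⟨rfl, t, rfl⟩ | h)
    · exact Or.inl ⟨rfl, t, rfl⟩
    · exact Or.inr h
  · rintro (⟨rfl, t, rfl⟩ | h)
    · exact Or.inl ⟨rfl, t, rfl⟩
    · exact Or.inr h

lemma nil_notmem_LA : [] ∉ LA := by
  intro h
  exact absurd (List.eq_nil_of_infix_nil h) (by simp)

lemma rep_notmem_LA (m n : ℕ) : (List.replicate m 1 ++ List.replicate n 0 : List (Fin 2)) ∉ LA := by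
  induction m with
  | zero =>
    simp only [List.replicate_zero, List.nil_append]
    induction n with
    | zero => exact nil_notmem_LA
    | succ n ih =>
      rw [List.replicate_succ]
      rw [LA_cons]
      rintro (⟨-, t, ht⟩ | h)
      · cases n with
        | zero => simp at ht
        | succ n => rw [List.replicate_succ] at ht; simp at ht
      · exact ih h
  | succ m ih =>
    rw [List.replicate_succ, List.cons_append, LA_cons]
    rintro (⟨h, -⟩ | h)
    · exact absurd h (by decide)
    · exact ih h

lemma notmem_LA_rep {x : List (Fin 2)} (h : x ∉ LA) :
    ∃ m n, x = List.replicate m 1 ++ List.replicate n 0 := by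
  induction x with
  | nil => exact ⟨0, 0, rfl⟩
  | cons a x ih =>
    rw [LA_cons] at h
    push_neg at h
    obtain ⟨h1, h2⟩ := h
    obtain ⟨m, n, rfl⟩ := ih h2
    fin_cases a
    · have hm : m = 0 := by
        by_contra hm
        obtain ⟨m', rfl⟩ := Nat.exists_eq_succ_of_ne_zero hm
        exact h1 rfl (List.replicate m' 1 ++ List.replicate n 0) (by rw [List.replicate_succ]; simp)
      subst hm
      exact ⟨0, n + 1, by rw [List.replicate_succ]; simp⟩
    · exact ⟨m + 1, n, by rw [List.replicate_succ]; simp⟩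

lemma notmem_LA_iff {x : List (Fin 2)} :
    x ∉ LA ↔ ∃ m n, x = List.replicate m 1 ++ List.replicate n 0 := by
  refine ⟨notmem_LA_rep, ?_⟩
  rintro ⟨m, n, rfl⟩
  exact rep_notmem_LA m n

lemma LB_disj_LA {x : List (Fin 2)} (h : x ∈ LB) : x ∉ LA := by
  obtain ⟨m, n, rfl⟩ := h; exact rep_notmem_LA _ _
lemma LC_disj_LA {x : List (Fin 2)} (h : x ∈ LC) : x ∉ LA := by
  obtain ⟨n, rfl⟩ := h; exact rep_notmem_LA 0 n
lemma LB_disj_LC {x : List (Fin 2)} (h : x ∈ LB) : x ∉ LC := by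
  obtain ⟨m, n, rfl⟩ := h
  rintro ⟨k, hk⟩
  rw [List.replicate_succ] at hk
  cases k with
  | zero => simp at hk
  | succ k => rw [List.replicate_succ] at hk; exact absurd (List.cons.injEq .. ▸ hk).1.symm (by decide)

lemma nil_notmem_LB : [] ∉ LB := by
  rintro ⟨m, n, h⟩; rw [List.replicate_succ] at h; simp at h
lemma nil_mem_LC : [] ∈ LC := ⟨0, rfl⟩
lemma ab_mem_LA : [0, 1] ∈ LA := List.infix_rfl
lemma b_mem_LB : [1] ∈ LB := ⟨0, 0, rfl⟩

lemma mem_LB_iff {x : List (Fin 2)} : x ∈ LB ↔ x ∉ LA ∧ ∃ t, x = 1 :: t := by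
  constructor
  · intro h
    refine ⟨LB_disj_LA h, ?_⟩
    obtain ⟨m, n, rfl⟩ := h
    exact ⟨List.replicate m 1 ++ List.replicate n 0, by rw [List.replicate_succ]; simp⟩
  · rintro ⟨h, t, rfl⟩
    obtain ⟨m, n, hx⟩ := notmem_LA_rep h
    cases m with
    | zero =>
      cases n with
      | zero => simp at hx
      | succ n => rw [List.replicate_succ] at hx; simp at hx
    | succ m =>
      exact ⟨m, n, hx⟩

lemma mem_LC_iff {x : List (Fin 2)} : x ∈ LC ↔ x ∉ LA ∧ ¬ ∃ t, x = 1 :: t := by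
  constructor
  · rintro ⟨n, rfl⟩
    refine ⟨rep_notmem_LA 0 n, ?_⟩
    rintro ⟨t, ht⟩
    cases n with
    | zero => simp at ht
    | succ n => rw [List.replicate_succ] at ht; simp at ht
  · rintro ⟨h1, h2⟩
    obtain ⟨m, n, rfl⟩ := notmem_LA_rep h1
    cases m with
    | zero => exact ⟨n, by simp⟩
    | succ m =>
      exact absurd ⟨List.replicate m 1 ++ List.replicate n 0, by rw [List.replicate_succ]; simp⟩ h2

-- cons characterizations
lemma cons0_LA {w : List (Fin 2)} : (0 :: w) ∈ LA ↔ w ∈ LA ∨ w ∈ LB := by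
  rw [LA_cons]
  constructor
  · rintro (⟨-, ht⟩ | h)
    · by_cases hw : w ∈ LA
      · exact Or.inl hw
      · exact Or.inr (mem_LB_iff.2 ⟨hw, ht⟩)
    · exact Or.inl h
  · rintro (h | h)
    · exact Or.inr h
    · exact Or.inl ⟨rfl, (mem_LB_iff.1 h).2⟩

lemma cons1_LA {w : List (Fin 2)} : (1 :: w) ∈ LA ↔ w ∈ LA := by
  rw [LA_cons]
  simp only [or_iff_right_iff_imp]
  rintro ⟨h, -⟩
  exact absurd h (by decide)

lemma cons0_LB {w : List (Fin 2)} : (0 :: w) ∉ LB := by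
  rintro ⟨m, n, h⟩
  rw [List.replicate_succ] at h
  simp at h

lemma cons1_LB {w : List (Fin 2)} : (1 :: w) ∈ LB ↔ w ∈ LB ∨ w ∈ LC := by
  constructor
  · rintro ⟨m, n, h⟩
    rw [List.replicate_succ] at h
    simp only [List.cons_append, List.cons.injEq] at h
    cases m with
    | zero => exact Or.inr ⟨n, by simpa using h.2⟩
    | succ m => exact Or.inl ⟨m, n, h.2⟩
  · rintro (⟨m, n, rfl⟩ | ⟨n, rfl⟩)
    · exact ⟨m + 1, n, by simp [List.replicate_succ]⟩
    · exact ⟨0, n, by rw [List.replicate_succ]; simp⟩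

lemma cons0_LC {w : List (Fin 2)} : (0 :: w) ∈ LC ↔ w ∈ LC := by
  constructor
  · rintro ⟨n, h⟩
    cases n with
    | zero => simp at h
    | succ n => rw [List.replicate_succ] at h; simp at h; exact ⟨n, h⟩
  · rintro ⟨n, rfl⟩
    exact ⟨n + 1, by rw [List.replicate_succ]⟩

lemma cons1_LC {w : List (Fin 2)} : (1 :: w) ∉ LC := by
  rintro ⟨n, h⟩
  cases n with
  | zero => simp at h
  | succ n => rw [List.replicate_succ] at h; simp at h

-- distinctness
lemma LA_ne_LB : LA ≠ LB := fun h => LB_disj_LA (h ▸ ab_mem_LA) ab_mem_LA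
lemma LA_ne_LC : LA ≠ LC := fun h => LC_disj_LA (h ▸ ab_mem_LA) ab_mem_LA
lemma LB_ne_LC : LB ≠ LC := fun h => LB_disj_LC b_mem_LB (h ▸ b_mem_LB)
lemma LA_ne_univ : LA ≠ Set.univ := fun h => nil_notmem_LA (h ▸ Set.mem_univ [])

-- K1 and quotients
def K1 : Language (Fin 2) := {x | x ∈ LA ∨ ∃ t, x = 1 :: t}

lemma LA_subset_K1 : ∀ x ∈ LA, x ∈ K1 := fun _ h => Or.inl h

lemma mem_K1_cons0 {x : List (Fin 2)} : (0 : Fin 2) :: x ∈ LA ↔ x ∈ K1 := by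
  rw [LA_cons]
  constructor
  · rintro (⟨-, h⟩ | h)
    · exact Or.inr h
    · exact Or.inl h
  · rintro (h | h)
    · exact Or.inr h
    · exact Or.inl ⟨rfl, h⟩

lemma K1_ne_univ : K1 ≠ Set.univ := by
  intro h
  have : [] ∈ K1 := h ▸ Set.mem_univ []
  rcases this with h | ⟨t, ht⟩
  · exact nil_notmem_LA h
  · simp at ht

lemma LA_ne_K1 : LA ≠ K1 := by
  intro h
  have : [1] ∈ K1 := Or.inr ⟨[], rfl⟩
  rw [← h] at this
  exact LB_disj_LA b_mem_LB this

lemma quots_LA : quots LA = {LA, K1, Set.univ} := by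
  have hq0 : leftQuot LA [] = LA := rfl
  have hq1 : leftQuot LA [0] = K1 := by
    ext x; exact mem_K1_cons0
  have hqK0 : leftQuot K1 [0] = K1 := by
    ext x
    show ((0:Fin 2) :: x ∈ LA ∨ ∃ t, (0:Fin 2) :: x = 1 :: t) ↔ _
    rw [mem_K1_cons0]
    simp only [or_iff_left_iff_imp]
    rintro ⟨t, ht⟩
    exact absurd (List.cons.injEq .. ▸ ht).1 (by decide)
  have hqK1 : leftQuot K1 [1] = Set.univ := by
    ext x
    exact iff_of_true (Or.inr ⟨x, rfl⟩) trivial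
  have hq2 : leftQuot LA [1] = LA := by ext x; exact cons1_LA
  have huniv : ∀ c : Fin 2, leftQuot (Set.univ : Language (Fin 2)) [c] = Set.univ := by
    intro c; exact Set.eq_univ_of_forall fun x => trivial
  apply Set.eq_of_subset_of_subset
  · rintro K ⟨w, rfl⟩
    induction w using List.reverseRecOn with
    | nil => rw [hq0]; exact Or.inl rfl
    | append_singleton w c ih =>
      have hsplit : leftQuot LA (w ++ [c]) = leftQuot (leftQuot LA w) [c] := by
        ext x
        show (w ++ [c]) ++ x ∈ LA ↔ w ++ ([c] ++ x) ∈ LA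
        rw [List.append_assoc]
      rw [hsplit]
      rcases ih with h | h | h <;> rw [h]
      · rcases fin2_cases c with rfl | rfl
        · rw [hq1]; exact Or.inr (Or.inl rfl)
        · rw [hq2]; exact Or.inl rfl
      · rcases fin2_cases c with rfl | rfl
        · rw [hqK0]; exact Or.inr (Or.inl rfl)
        · rw [hqK1]; exact Or.inr (Or.inr rfl)
      · rw [huniv]; exact Or.inr (Or.inr rfl)
  · rintro K (rfl | rfl | rfl)
    · exact ⟨[], hq0.symm⟩
    · exact ⟨[0], hq1.symm⟩
    · refine ⟨[0, 1], ?_⟩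
      ext x
      exact iff_of_true trivial ⟨[], x, by simp⟩

lemma mem_sing_univ {a : Language (Fin 2)} :
    a ∈ @singleton (Set (List (Fin 2))) (Set (Language (Fin 2))) (@Set.instSingletonSet (Language (Fin 2))) Set.univ ↔
      a = Set.univ := Iff.rfl

lemma univ_mem_quots : Set.univ ∈ quots LA := by rw [quots_LA]; exact Or.inr (Or.inr rfl)

-- difference characterizations
lemma diffBC {x : List (Fin 2)} : (x ∉ LA ∧ x ∈ K1) ↔ x ∈ LB := by
  rw [mem_LB_iff]
  constructor
  · rintro ⟨h1, h2 | h2⟩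
    · exact absurd h2 h1
    · exact ⟨h1, h2⟩
  · rintro ⟨h1, h2⟩
    exact ⟨h1, Or.inr h2⟩

lemma diffC {x : List (Fin 2)} : (x ∉ LA ∧ x ∉ K1) ↔ x ∈ LC := by
  rw [mem_LC_iff]
  constructor
  · rintro ⟨h1, h2⟩
    exact ⟨h1, fun ht => h2 (Or.inr ht)⟩
  · rintro ⟨h1, h2⟩
    refine ⟨h1, ?_⟩
    rintro (h | h)
    · exact h1 h
    · exact h2 h

-- #### Part 1
theorem atoms_LA (X : Language (Fin 2)) : IsAtomOf LA X ↔ X ∈ atomSet3 := by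
  constructor
  · rintro ⟨⟨x0, hx0⟩, S, hS, rfl⟩
    rw [quots_LA] at *
    have hx0' := hx0
    simp only [Set.mem_setOf_eq, mem_sing_univ, Set.mem_insert_iff, Set.mem_singleton_iff, forall_eq_or_imp,
      forall_eq] at hx0'
    have huS : Set.univ ∈ S := (hx0'.2.2 _ rfl).1 (Set.mem_univ x0)
    have hX : {x : List (Fin 2) | ∀ K ∈ ({LA, K1, Set.univ} : Set (Language (Fin 2))),
        (x ∈ K ↔ K ∈ S)} = {x | (x ∈ LA ↔ LA ∈ S) ∧ (x ∈ K1 ↔ K1 ∈ S)} := by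
      ext x
      simp only [Set.mem_setOf_eq, mem_sing_univ, Set.mem_insert_iff, Set.mem_singleton_iff, forall_eq_or_imp,
        forall_eq]
      constructor
      · rintro ⟨h1, h2, -⟩; exact ⟨h1, h2⟩
      · rintro ⟨h1, h2⟩; exact ⟨h1, h2, fun a ha => by subst ha; exact iff_of_true trivial huS⟩
    rw [hX]
    by_cases hA : LA ∈ S <;> by_cases hK : K1 ∈ S
    · refine Or.inl ?_
      ext x
      simp only [Set.mem_setOf_eq, hA, hK, iff_true]
      exact ⟨fun h => h.1, fun h => ⟨h, LA_subset_K1 x h⟩⟩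
    · exfalso
      rw [hX] at hx0
      simp only [Set.mem_setOf_eq, hA, hK, iff_true, iff_false] at hx0
      exact hx0.2 (LA_subset_K1 x0 hx0.1)
    · refine Or.inr (Or.inl ?_)
      ext x
      simp only [Set.mem_setOf_eq, hA, hK, iff_true, iff_false]
      exact diffBC
    · refine Or.inr (Or.inr ?_)
      ext x
      simp only [Set.mem_setOf_eq, hA, hK, iff_false]
      exact diffC
  · rintro (rfl | rfl | rfl)
    · refine ⟨⟨[0,1], ab_mem_LA⟩, quots LA, le_refl _, ?_⟩
      rw [quots_LA]
      ext x
      simp only [Set.mem_setOf_eq, mem_sing_univ, Set.mem_insert_iff, Set.mem_singleton_iff, forall_eq_or_imp,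
        forall_eq, true_or, or_true, iff_true, Set.mem_univ, and_true]
      exact ⟨fun h => ⟨h, LA_subset_K1 x h, fun a ha => by subst ha; exact iff_of_true trivial (Or.inr (Or.inr rfl))⟩, fun h => h.1⟩

    · refine ⟨⟨[1], b_mem_LB⟩, {K1, Set.univ}, ?_, ?_⟩
      · rw [quots_LA]
        rintro K (rfl | rfl)
        · exact Or.inr (Or.inl rfl)
        · exact Or.inr (Or.inr rfl)
      · rw [quots_LA]
        ext x
        simp only [Set.mem_setOf_eq, mem_sing_univ, Set.mem_insert_iff, Set.mem_singleton_iff, forall_eq_or_imp,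
          forall_eq, Set.mem_univ, LA_ne_K1, LA_ne_univ, or_self, iff_false, true_or, or_true,
          iff_true, and_true, true_and]
        exact ⟨fun h => ⟨(diffBC.mpr h).1, (diffBC.mpr h).2,
            fun a ha => by subst ha; exact iff_of_true trivial (Or.inr rfl)⟩,
          fun h => diffBC.mp ⟨h.1, h.2.1⟩⟩
    · refine ⟨⟨[], nil_mem_LC⟩, {Set.univ}, ?_, ?_⟩
      · rintro K rfl
        exact univ_mem_quots
      · rw [quots_LA]
        ext x
        simp only [Set.mem_setOf_eq, mem_sing_univ, Set.mem_insert_iff, Set.mem_singleton_iff, forall_eq_or_imp,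
          forall_eq, Set.mem_univ, LA_ne_univ, K1_ne_univ, iff_false, iff_true, and_true]
        exact ⟨fun h => ⟨(diffC.mpr h).1, (diffC.mpr h).2,
            fun a ha => by subst ha; exact iff_of_true trivial rfl⟩,
          fun h => diffC.mp ⟨h.1, h.2.1⟩⟩

-- ############ Section 2: generic NFA lemmas
lemma NFA.mem_evalFrom_iff {α σ : Type} (M : NFA α σ) (w : List α) (U : Set σ) (p : σ) :
    p ∈ M.evalFrom U w ↔ ∃ q ∈ U, p ∈ M.evalFrom {q} w := by
  induction w generalizing U with
  | nil => simp [NFA.evalFrom]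
  | cons x w ih =>
    show p ∈ M.evalFrom (M.stepSet U x) w ↔ _
    rw [ih]
    constructor
    · rintro ⟨r, hr, hp⟩
      rw [NFA.mem_stepSet] at hr
      obtain ⟨q, hq, hr⟩ := hr
      refine ⟨q, hq, ?_⟩
      show p ∈ M.evalFrom (M.stepSet {q} x) w
      rw [ih]
      exact ⟨r, by rw [NFA.mem_stepSet]; exact ⟨q, rfl, hr⟩, hp⟩
    · rintro ⟨q, hq, hp⟩
      have : p ∈ M.evalFrom (M.stepSet {q} x) w := hp
      rw [ih] at this
      obtain ⟨r, hr, hp'⟩ := this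
      rw [NFA.mem_stepSet] at hr
      obtain ⟨q', hq', hr⟩ := hr
      rw [Set.mem_singleton_iff] at hq'
      subst hq'
      exact ⟨r, by rw [NFA.mem_stepSet]; exact ⟨_, hq, hr⟩, hp'⟩

lemma NFA.mem_accepts_rightLang {α σ : Type} (M : NFA α σ) (w : List α) :
    w ∈ M.accepts ↔ ∃ q ∈ M.start, w ∈ M.rightLang q := by
  rw [NFA.mem_accepts]
  constructor
  · rintro ⟨p, hp, hw⟩
    rw [NFA.mem_evalFrom_iff] at hw
    obtain ⟨q, hq, hw⟩ := hw
    exact ⟨q, hq, p, hp, hw⟩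
  · rintro ⟨q, hq, p, hp, hw⟩
    refine ⟨p, hp, ?_⟩
    rw [NFA.mem_evalFrom_iff]
    exact ⟨q, hq, hw⟩

lemma NFA.rightLang_nil {α σ : Type} (M : NFA α σ) (q : σ) :
    [] ∈ M.rightLang q ↔ q ∈ M.accept := by
  constructor
  · rintro ⟨p, hp, hq⟩
    rw [show M.evalFrom {q} [] = {q} from rfl, Set.mem_singleton_iff] at hq
    subst hq; exact hp
  · intro h; exact ⟨q, h, rfl⟩

lemma NFA.rightLang_cons {α σ : Type} (M : NFA α σ) (q : σ) (x : α) (w : List α) :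
    (x :: w) ∈ M.rightLang q ↔ ∃ p ∈ M.step q x, w ∈ M.rightLang p := by
  constructor
  · rintro ⟨r, hr, hq⟩
    rw [show M.evalFrom {q} (x :: w) = M.evalFrom (M.stepSet {q} x) w from rfl,
      NFA.mem_evalFrom_iff] at hq
    obtain ⟨p, hp, hq⟩ := hq
    rw [NFA.mem_stepSet] at hp
    obtain ⟨q', hq', hp⟩ := hp
    rw [Set.mem_singleton_iff] at hq'
    subst hq'
    exact ⟨p, hp, r, hr, hq⟩
  · rintro ⟨p, hp, r, hr, hw⟩
    refine ⟨r, hr, ?_⟩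
    rw [show M.evalFrom {q} (x :: w) = M.evalFrom (M.stepSet {q} x) w from rfl,
      NFA.mem_evalFrom_iff]
    exact ⟨p, by rw [NFA.mem_stepSet]; exact ⟨q, rfl, hp⟩, hw⟩


-- ############ Part 2
theorem atomic_nfa_min_states (σ : Type) (_ : Finite σ) (M : NFA (Fin 2) σ)
    (hacc : M.accepts = LA) (_ : M.IsAtomic) : 3 ≤ Nat.card σ := by
  have hab : [0, 1] ∈ M.accepts := hacc ▸ ab_mem_LA
  rw [NFA.mem_accepts_rightLang] at hab
  obtain ⟨q0, hq0, hab⟩ := hab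
  have hR0 : ∀ w ∈ M.rightLang q0, w ∈ LA := by
    intro w hw
    rw [← hacc]
    rw [NFA.mem_accepts_rightLang]
    exact ⟨q0, hq0, hw⟩
  have hab' : ((0 : Fin 2) :: [1]) ∈ M.rightLang q0 := hab
  rw [NFA.rightLang_cons] at hab'
  obtain ⟨q1, hq1, hb⟩ := hab'
  have hR1 : ∀ w ∈ M.rightLang q1, w ∈ LA ∨ w ∈ LB := by
    intro w hw
    have : ((0 : Fin 2) :: w) ∈ M.rightLang q0 := by
      rw [NFA.rightLang_cons]; exact ⟨q1, hq1, hw⟩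
    exact cons0_LA.mp (hR0 _ this)
  have hb' : ((1 : Fin 2) :: []) ∈ M.rightLang q1 := hb
  rw [NFA.rightLang_cons] at hb'
  obtain ⟨q2, hq2, hnil⟩ := hb'
  have hbnotLA : ([1] : List (Fin 2)) ∉ LA := LB_disj_LA b_mem_LB
  have h01 : q0 ≠ q1 := by
    rintro rfl
    exact hbnotLA (hR0 _ hb)
  have h02 : q0 ≠ q2 := by
    rintro rfl
    exact nil_notmem_LA (hR0 _ hnil)
  have h12 : q1 ≠ q2 := by
    rintro rfl
    rcases hR1 _ hnil with h | h
    · exact nil_notmem_LA h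
    · exact nil_notmem_LB h
  have hinj : Function.Injective ![q0, q1, q2] := by
    intro i j hij
    fin_cases i <;> fin_cases j <;> simp_all <;>
      first
        | rfl
        | exact absurd hij h01 | exact absurd hij h02 | exact absurd hij h12
        | exact absurd hij.symm h01 | exact absurd hij.symm h02 | exact absurd hij.symm h12
  calc 3 = Nat.card (Fin 3) := by simp
    _ ≤ Nat.card σ := Nat.card_le_card_of_injective _ hinj



-- ############ Section 3: atom indexing infrastructure
def atomF : Fin 3 → Language (Fin 2) := ![LA, LB, LC]
def alphaF : Fin 3 → Fin 2 → Finset (Fin 3) := ![![{0,1}, {0}], ![∅, {1,2}], ![{2}, ∅]]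

lemma fin3_cases (i : Fin 3) : i = 0 ∨ i = 1 ∨ i = 2 := by omega

lemma atomF_mem (j : Fin 3) : atomF j ∈ atomSet3 := by
  fin_cases j
  · exact Or.inl rfl
  · exact Or.inr (Or.inl rfl)
  · exact Or.inr (Or.inr rfl)

lemma mem_atomSet3_iff {Y : Language (Fin 2)} : Y ∈ atomSet3 ↔ ∃ j, Y = atomF j := by
  constructor
  · rintro (rfl | rfl | rfl)
    exacts [⟨0, rfl⟩, ⟨1, rfl⟩, ⟨2, rfl⟩]
  · rintro ⟨j, rfl⟩; exact atomF_mem j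

lemma atomF_nonempty (j : Fin 3) : ∃ w, w ∈ atomF j := by
  fin_cases j
  exacts [⟨_, ab_mem_LA⟩, ⟨_, b_mem_LB⟩, ⟨_, nil_mem_LC⟩]

lemma atomF_disj {j k : Fin 3} {w : List (Fin 2)} (hj : w ∈ atomF j) (hk : w ∈ atomF k) :
    j = k := by
  fin_cases j <;> fin_cases k <;> simp only [atomF, Matrix.cons_val_zero, Matrix.cons_val_one,
    Matrix.head_cons, Matrix.cons_val_two, Matrix.tail_cons] at hj hk <;>
    first
      | rfl
      | exact absurd hj (LB_disj_LA hk) | exact absurd hk (LB_disj_LA hj)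
      | exact absurd hj (LC_disj_LA hk) | exact absurd hk (LC_disj_LA hj)
      | exact absurd hk (LB_disj_LC hj) | exact absurd hj (LB_disj_LC hk)

lemma atomF_inj : Function.Injective atomF := by
  intro j k h
  obtain ⟨w, hw⟩ := atomF_nonempty j
  exact atomF_disj hw (h ▸ hw)

lemma cons_atom (i : Fin 3) (x : Fin 2) (w : List (Fin 2)) :
    x :: w ∈ atomF i ↔ ∃ j ∈ alphaF i x, w ∈ atomF j := by
  rcases fin3_cases i with rfl | rfl | rfl <;> rcases fin2_cases x with rfl | rfl <;>
    simp only [atomF, alphaF, Matrix.cons_val_zero, Matrix.cons_val_one, Matrix.head_cons,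
      Matrix.cons_val_two, Matrix.tail_cons]
  · rw [cons0_LA]
    constructor
    · rintro (h | h)
      · exact ⟨0, by decide, h⟩
      · exact ⟨1, by decide, h⟩
    · rintro ⟨j, hj, h⟩
      fin_cases j
      · exact Or.inl h
      · exact Or.inr h
      · simp at hj
  · rw [cons1_LA]
    constructor
    · intro h; exact ⟨0, by decide, h⟩
    · rintro ⟨j, hj, h⟩
      fin_cases j
      · exact h
      · simp at hj
      · simp at hj
  · constructor
    · intro h; exact absurd h cons0_LB
    · rintro ⟨j, hj, -⟩; simp at hj
  · rw [cons1_LB]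
    constructor
    · rintro (h | h)
      · exact ⟨1, by decide, h⟩
      · exact ⟨2, by decide, h⟩
    · rintro ⟨j, hj, h⟩
      fin_cases j
      · simp at hj
      · exact Or.inl h
      · exact Or.inr h
  · rw [cons0_LC]
    constructor
    · intro h; exact ⟨2, by decide, h⟩
    · rintro ⟨j, hj, h⟩
      fin_cases j
      · simp at hj
      · simp at hj
      · exact h
  · constructor
    · intro h; exact absurd h cons1_LC
    · rintro ⟨j, hj, -⟩; simp at hj

def toLang (s : Finset (Fin 3)) : Set (Language (Fin 2)) := atomF '' ↑s

lemma mem_toLang {s : Finset (Fin 3)} {Y : Language (Fin 2)} :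
    Y ∈ toLang s ↔ ∃ j ∈ s, Y = atomF j := by
  simp only [toLang, Set.mem_image, Finset.mem_coe]
  exact ⟨fun ⟨j, hj, h⟩ => ⟨j, hj, h.symm⟩, fun ⟨j, hj, h⟩ => ⟨j, hj, h.symm⟩⟩

lemma toLang_inj : Function.Injective toLang := by
  intro s t h
  have := Set.image_injective.mpr atomF_inj h
  exact_mod_cast this

lemma alphaStep_atomF (i : Fin 3) (x : Fin 2) :
    alphaStep (atomF i) x = toLang (alphaF i x) := by
  ext Y
  rw [mem_toLang]
  constructor
  · rintro ⟨hY, hstep⟩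
    obtain ⟨j, rfl⟩ := mem_atomSet3_iff.mp hY
    obtain ⟨w0, hw0⟩ := atomF_nonempty j
    obtain ⟨k, hk, hw0'⟩ := (cons_atom i x w0).mp (hstep w0 hw0)
    exact ⟨j, atomF_disj hw0' hw0 ▸ hk, rfl⟩
  · rintro ⟨j, hj, rfl⟩
    exact ⟨atomF_mem j, fun w hw => (cons_atom i x w).mpr ⟨j, hj, hw⟩⟩

lemma toLang_biUnion {β : Type*} (t : Finset β) (g : β → Finset (Fin 3)) :
    toLang (t.biUnion g) = ⋃ k ∈ t, toLang (g k) := by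
  ext Y
  simp only [mem_toLang, Set.mem_iUnion, Finset.mem_biUnion]
  constructor
  · rintro ⟨j, ⟨k, hk, hj⟩, rfl⟩
    exact ⟨k, hk, j, hj, rfl⟩
  · rintro ⟨k, hk, j, hj, rfl⟩
    exact ⟨j, ⟨k, hk, hj⟩, rfl⟩

def tgt (s : Finset (Fin 3)) (x : Fin 2) : Finset (Fin 3) := s.biUnion (fun i => alphaF i x)

lemma alphaStepSet_toLang (s : Finset (Fin 3)) (x : Fin 2) :
    alphaStepSet (toLang s) x = toLang (tgt s x) := by
  rw [tgt, toLang_biUnion]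
  ext Y
  simp only [alphaStepSet, Set.mem_iUnion]
  constructor
  · rintro ⟨X, hX, hY⟩
    obtain ⟨i, hi, rfl⟩ := mem_toLang.mp hX
    rw [alphaStep_atomF] at hY
    exact ⟨i, hi, hY⟩
  · rintro ⟨i, hi, hY⟩
    exact ⟨atomF i, mem_toLang.mpr ⟨i, hi, rfl⟩, (alphaStep_atomF i x) ▸ hY⟩

lemma cons_mem_union_iff {S : Set (Language (Fin 2))} (hS : S ⊆ atomSet3) (x : Fin 2)
    (w : List (Fin 2)) : (∃ X ∈ S, x :: w ∈ X) ↔ ∃ Y ∈ alphaStepSet S x, w ∈ Y := by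
  constructor
  · rintro ⟨X, hXS, hw⟩
    obtain ⟨i, rfl⟩ := mem_atomSet3_iff.mp (hS hXS)
    obtain ⟨k, hk, hw'⟩ := (cons_atom i x w).mp hw
    exact ⟨atomF k, Set.mem_biUnion hXS ((alphaStep_atomF i x) ▸ mem_toLang.mpr ⟨k, hk, rfl⟩), hw'⟩
  · rintro ⟨Y, hY, hw⟩
    obtain ⟨X, hXS, hY⟩ := Set.mem_iUnion₂.mp hY
    obtain ⟨i, rfl⟩ := mem_atomSet3_iff.mp (hS hXS)
    rw [alphaStep_atomF] at hY
    obtain ⟨k, hk, rfl⟩ := mem_toLang.mp hY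
    exact ⟨atomF i, hXS, (cons_atom i x w).mpr ⟨k, hk, hw⟩⟩


-- ############ Section 4: Legal3NFA semantics
lemma atomF_zero : atomF 0 = LA := rfl
lemma atomF_one : atomF 1 = LB := rfl
lemma atomF_two : atomF 2 = LC := rfl

namespace Legal3NFA

variable (N : Legal3NFA)

lemma start_eq : N.start = {{LA}} := by
  have hU := N.cond_init
  have hmem : ∀ S ∈ N.start, S = {LA} := by
    intro S hS
    apply Set.eq_of_subset_of_subset
    · intro X hX
      rw [← hU]
      exact Set.mem_biUnion hS hX
    · rintro X rfl
      by_contra hLA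
      obtain ⟨Y, hY⟩ := (N.states_atoms S (N.start_sub hS)).1
      have : Y ∈ ({LA} : Set (Language (Fin 2))) := hU ▸ Set.mem_biUnion hS hY
      rw [Set.mem_singleton_iff] at this
      exact hLA (this ▸ hY)
  have hne : N.start.Nonempty := by
    by_contra h
    rw [Set.not_nonempty_iff_eq_empty] at h
    rw [h] at hU
    simp at hU
  obtain ⟨S0, hS0⟩ := hne
  apply Set.eq_of_subset_of_subset
  · intro S hS
    rw [Set.mem_singleton_iff]
    exact hmem S hS
  · rintro S rfl
    exact (hmem S0 hS0) ▸ hS0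

lemma sA_mem : ({LA} : Set (Language (Fin 2))) ∈ N.states :=
  N.start_sub (N.start_eq ▸ rfl)

lemma rightLang_eq (w : List (Fin 2)) (q : {S // S ∈ N.states}) :
    w ∈ N.toNFA.rightLang q ↔ ∃ X ∈ q.1, w ∈ X := by
  induction w generalizing q with
  | nil =>
    rw [NFA.rightLang_nil]
    have hacc : q ∈ N.toNFA.accept ↔ LC ∈ q.1 := N.cond_fin q.1 q.2
    rw [hacc]
    constructor
    · intro h; exact ⟨LC, h, nil_mem_LC⟩
    · rintro ⟨X, hX, hw⟩
      obtain ⟨j, rfl⟩ := mem_atomSet3_iff.mp ((N.states_atoms q.1 q.2).2 hX)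
      have : j = 2 := atomF_disj hw (nil_mem_LC : [] ∈ atomF 2)
      subst this
      exact hX
  | cons x w ih =>
    rw [NFA.rightLang_cons]
    have h1 : (∃ p ∈ N.toNFA.step q x, w ∈ N.toNFA.rightLang p) ↔
        ∃ T ∈ N.step q.1 x, ∃ X ∈ T, w ∈ X := by
      constructor
      · rintro ⟨p, hp, hw⟩
        exact ⟨p.1, hp, (ih p).mp hw⟩
      · rintro ⟨T, hT, hX⟩
        exact ⟨⟨T, N.step_mem q.1 x hT⟩, hT, (ih _).mpr hX⟩
    rw [h1]
    have h2 : (∃ T ∈ N.step q.1 x, ∃ X ∈ T, w ∈ X) ↔ ∃ Y ∈ alphaStepSet q.1 x, w ∈ Y := by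
      rw [← N.cond_step q.1 q.2 x]
      constructor
      · rintro ⟨T, hT, X, hX, hw⟩
        exact ⟨X, Set.mem_biUnion hT hX, hw⟩
      · rintro ⟨Y, hY, hw⟩
        obtain ⟨T, hT, hY⟩ := Set.mem_iUnion₂.mp hY
        exact ⟨T, hT, Y, hY, hw⟩
    rw [h2]
    exact (cons_mem_union_iff (N.states_atoms q.1 q.2).2 x w).symm

lemma accepts_eq : N.toNFA.accepts = LA := by
  ext w
  rw [NFA.mem_accepts_rightLang]
  constructor
  · rintro ⟨q, hq, hw⟩
    have hq1 : q.1 ∈ N.start := hq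
    rw [N.start_eq, Set.mem_singleton_iff] at hq1
    obtain ⟨X, hX, hw⟩ := (N.rightLang_eq w q).mp hw
    rw [hq1, Set.mem_singleton_iff] at hX
    exact hX ▸ hw
  · intro hw
    refine ⟨⟨{LA}, N.sA_mem⟩, ?_, ?_⟩
    · show ({LA} : Set (Language (Fin 2))) ∈ N.start
      rw [N.start_eq]; rfl
    · exact (N.rightLang_eq w _).mpr ⟨LA, rfl, hw⟩

lemma reduced : N.toNFA.IsReduced := by
  have key : ∀ q p : {S // S ∈ N.states}, N.toNFA.rightLang q = N.toNFA.rightLang p →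
      ∀ X ∈ q.1, X ∈ p.1 := by
    intro q p h X hX
    obtain ⟨j, rfl⟩ := mem_atomSet3_iff.mp ((N.states_atoms q.1 q.2).2 hX)
    obtain ⟨w, hw⟩ := atomF_nonempty j
    have hwq : w ∈ N.toNFA.rightLang q := (N.rightLang_eq w q).mpr ⟨atomF j, hX, hw⟩
    rw [h] at hwq
    obtain ⟨X', hX', hw'⟩ := (N.rightLang_eq w p).mp hwq
    obtain ⟨k, rfl⟩ := mem_atomSet3_iff.mp ((N.states_atoms p.1 p.2).2 hX')
    have : k = j := atomF_disj hw' hw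
    exact this ▸ hX'
  intro q p h
  apply Subtype.ext
  apply Set.eq_of_subset_of_subset
  · intro X hX; exact key q p h X hX
  · intro X hX; exact key p q h.symm X hX

lemma atomic : N.toNFA.IsAtomic := by
  intro q
  refine ⟨q.1, ?_, ?_⟩
  · intro A hA
    rw [N.accepts_eq]
    refine ⟨(atoms_LA A).mpr ((N.states_atoms q.1 q.2).2 hA), Set.univ, univ_mem_quots,
      fun x _ => trivial⟩
  · ext w
    exact N.rightLang_eq w q

end Legal3NFA


-- ############ Section 5: counting
def st7 : Fin 7 → Finset (Fin 3) := ![{0}, {1}, {2}, {0,1}, {0,2}, {1,2}, {0,1,2}]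
def stOf (u v : Fin 7) : Fin 3 → Finset (Fin 3) := ![{0}, st7 u, st7 v]
def EncP := {p : Fin 7 × Fin 7 // 0 < p.1 ∧ p.1 < p.2}
instance : Fintype EncP := by unfold EncP; infer_instance
def Enc := Σ p : EncP, ∀ i : Fin 3, ∀ x : Fin 2,
  {D : Finset (Fin 3) // D.biUnion (stOf p.1.1 p.1.2) = tgt (stOf p.1.1 p.1.2 i) x}
instance : Fintype Enc := by unfold Enc; infer_instance

set_option maxRecDepth 10000 in
lemma card_Enc : Fintype.card Enc = 281 := by decide

lemma st7_inj : Function.Injective st7 := by decide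
lemma st7_surj (s : Finset (Fin 3)) (hs : s.Nonempty) : ∃ k, st7 k = s := by
  revert hs
  revert s
  decide

def stL (u v : Fin 7) (j : Fin 3) : Set (Language (Fin 2)) := toLang (stOf u v j)

lemma stOf_st7 (u v : Fin 7) (j : Fin 3) : stOf u v j = st7 (![0, u, v] j) := by
  rcases fin3_cases j with rfl | rfl | rfl <;> rfl

lemma stOf_inj {u v : Fin 7} (hu : 0 < u) (huv : u < v) : Function.Injective (stOf u v) := by
  intro i j hij
  rw [stOf_st7, stOf_st7] at hij
  have hval := congrArg Fin.val (st7_inj hij)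
  have hu' : 0 < u.val := hu
  have huv' : u.val < v.val := huv
  rcases fin3_cases i with rfl | rfl | rfl <;> rcases fin3_cases j with rfl | rfl | rfl <;>
    first
      | rfl
      | (exfalso
         simp only [Matrix.cons_val_zero, Matrix.cons_val_one, Matrix.head_cons,
           Matrix.cons_val_two, Matrix.tail_cons] at hval
         omega)

lemma stL_inj {u v : Fin 7} (hu : 0 < u) (huv : u < v) : Function.Injective (stL u v) :=
  fun i j h => stOf_inj hu huv (toLang_inj h)

lemma stL_zero (u v : Fin 7) : stL u v 0 = {LA} := by
  ext Y
  rw [stL, show stOf u v 0 = {0} from rfl, mem_toLang]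
  simp only [Finset.mem_singleton, Set.mem_singleton_iff]
  constructor
  · rintro ⟨j, rfl, rfl⟩; rfl
  · rintro rfl; exact ⟨0, rfl, rfl⟩

lemma st7_nonempty (k : Fin 7) : (st7 k).Nonempty := by revert k; decide

lemma stOf_nonempty (u v : Fin 7) (j : Fin 3) : (stOf u v j).Nonempty := by
  rw [stOf_st7]; exact st7_nonempty _

lemma range_stL (u v : Fin 7) :
    Set.range (stL u v) = {toLang (st7 0), toLang (st7 u), toLang (st7 v)} := by
  ext S
  constructor
  · rintro ⟨j, rfl⟩
    rcases fin3_cases j with rfl | rfl | rfl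
    · exact Or.inl (congrArg toLang (stOf_st7 u v 0))
    · exact Or.inr (Or.inl (congrArg toLang (stOf_st7 u v 1)))
    · exact Or.inr (Or.inr (congrArg toLang (stOf_st7 u v 2)))
  · rintro (rfl | rfl | rfl)
    exacts [⟨0, (congrArg toLang (stOf_st7 u v 0)).symm⟩,
      ⟨1, (congrArg toLang (stOf_st7 u v 1)).symm⟩,
      ⟨2, (congrArg toLang (stOf_st7 u v 2)).symm⟩]

def encNFA (u v : Fin 7) (d : Fin 3 → Fin 2 → Finset (Fin 3)) (hu : 0 < u) (huv : u < v)
    (hd : ∀ i x, (d i x).biUnion (stOf u v) = tgt (stOf u v i) x) : Legal3NFA where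
  states := Set.range (stL u v)
  step S x := {T | ∃ j, S = stL u v j ∧ ∃ k ∈ d j x, T = stL u v k}
  start := {stL u v 0}
  accept := {S | S ∈ Set.range (stL u v) ∧ LC ∈ S}
  card_states := by
    rw [← Set.image_univ, Set.ncard_image_of_injective _ (stL_inj hu huv), Set.ncard_univ]
    simp
  states_atoms := by
    rintro S ⟨j, rfl⟩
    constructor
    · obtain ⟨k, hk⟩ := stOf_nonempty u v j
      exact ⟨atomF k, mem_toLang.mpr ⟨k, hk, rfl⟩⟩
    · intro Y hY
      obtain ⟨k, -, rfl⟩ := mem_toLang.mp hY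
      exact atomF_mem k
  step_mem := by
    rintro S x T ⟨j, -, k, -, rfl⟩
    exact ⟨k, rfl⟩
  step_out := by
    intro S hS x
    ext T
    simp only [Set.mem_setOf_eq, Set.mem_empty_iff_false, iff_false]
    rintro ⟨j, rfl, -⟩
    exact hS ⟨j, rfl⟩
  start_sub := by rintro S rfl; exact ⟨0, rfl⟩
  accept_sub := fun S h => h.1
  cond_init := by
    rw [Set.biUnion_singleton, stL_zero]
  cond_step := by
    rintro S ⟨j, rfl⟩ x
    have hact : {T | ∃ j', stL u v j = stL u v j' ∧ ∃ k ∈ d j' x, T = stL u v k} =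
        {T | ∃ k ∈ d j x, T = stL u v k} := by
      ext T
      constructor
      · rintro ⟨j', hj', hk⟩
        exact (stL_inj hu huv hj') ▸ hk
      · intro h; exact ⟨j, rfl, h⟩
    show (⋃ T ∈ {T | ∃ j', stL u v j = stL u v j' ∧ ∃ k ∈ d j' x, T = stL u v k}, T) =
      alphaStepSet (stL u v j) x
    rw [hact]
    have h2 : (⋃ T ∈ {T | ∃ k ∈ d j x, T = stL u v k}, T) = ⋃ k ∈ d j x, stL u v k := by
      ext w
      simp only [Set.mem_iUnion, Set.mem_setOf_eq]
      constructor
      · rintro ⟨T, ⟨k, hk, rfl⟩, hw⟩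
        exact ⟨k, hk, hw⟩
      · rintro ⟨k, hk, hw⟩
        exact ⟨stL u v k, ⟨k, hk, rfl⟩, hw⟩
    rw [h2]
    show (⋃ k ∈ d j x, toLang (stOf u v k)) = alphaStepSet (toLang (stOf u v j)) x
    rw [← toLang_biUnion, hd j x, alphaStepSet_toLang]
  cond_fin := by
    intro S hS
    exact ⟨fun h => h.2, fun h => ⟨hS, h⟩⟩

def encToLegal (e : Enc) : Legal3NFA :=
  encNFA e.1.1.1 e.1.1.2 (fun i x => (e.2 i x).1) e.1.2.1 e.1.2.2 (fun i x => (e.2 i x).2)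

lemma legal_ext {N M : Legal3NFA} (h1 : N.states = M.states) (h2 : N.step = M.step)
    (h3 : N.start = M.start) (h4 : N.accept = M.accept) : N = M := by
  cases N; cases M
  dsimp at h1 h2 h3 h4
  subst h1 h2 h3 h4
  rfl

lemma encNFA_step_eval (u v : Fin 7) (d : Fin 3 → Fin 2 → Finset (Fin 3)) (hu : 0 < u)
    (huv : u < v) (hd : ∀ i x, (d i x).biUnion (stOf u v) = tgt (stOf u v i) x) (j : Fin 3)
    (x : Fin 2) :
    (encNFA u v d hu huv hd).step (stL u v j) x = {T | ∃ k ∈ d j x, T = stL u v k} := by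
  ext T
  constructor
  · rintro ⟨j', hj', hk⟩
    exact (stL_inj hu huv hj') ▸ hk
  · intro h; exact ⟨j, rfl, h⟩

lemma range_index {u1 v1 u2 v2 : Fin 7} (h : Set.range (stL u1 v1) = Set.range (stL u2 v2))
    (j : Fin 3) : ∃ j', (![0, u1, v1] j) = (![0, u2, v2] j') := by
  have hmem : stL u1 v1 j ∈ Set.range (stL u2 v2) := h ▸ Set.mem_range_self j
  obtain ⟨j', hj'⟩ := hmem
  refine ⟨j', st7_inj ?_⟩
  rw [← stOf_st7, ← stOf_st7]
  exact toLang_inj hj'.symm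

lemma idx_val {w u2 v2 : Fin 7} (h : ∃ j', (w : Fin 7) = ![0, u2, v2] j') :
    w.val = 0 ∨ w.val = u2.val ∨ w.val = v2.val := by
  obtain ⟨j', hj⟩ := h
  rcases fin3_cases j' with rfl | rfl | rfl
  · exact Or.inl (congrArg Fin.val hj)
  · exact Or.inr (Or.inl (congrArg Fin.val hj))
  · exact Or.inr (Or.inr (congrArg Fin.val hj))

lemma enc_inj : Function.Injective encToLegal := by
  rintro ⟨⟨⟨u1, v1⟩, hu1, huv1⟩, D1⟩ ⟨⟨⟨u2, v2⟩, hu2, huv2⟩, D2⟩ h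
  have hst : Set.range (stL u1 v1) = Set.range (stL u2 v2) := congrArg Legal3NFA.states h
  have e1 : (![0, u1, v1] 1) = u1 := rfl
  have e2 : (![0, u1, v1] 2) = v1 := rfl
  have f1 : (![0, u2, v2] 1) = u2 := rfl
  have f2 : (![0, u2, v2] 2) = v2 := rfl
  have hx1 := idx_val (e1 ▸ range_index hst 1)
  have hx2 := idx_val (e2 ▸ range_index hst 2)
  have hy1 := idx_val (f1 ▸ range_index hst.symm 1)
  have hy2 := idx_val (f2 ▸ range_index hst.symm 2)
  have hu1' : 0 < u1.val := hu1
  have huv1' : u1.val < v1.val := huv1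
  have hu2' : 0 < u2.val := hu2
  have huv2' : u2.val < v2.val := huv2
  have huu : u1 = u2 := Fin.ext (by omega)
  have hvv : v1 = v2 := Fin.ext (by omega)
  subst huu hvv
  have hsp : ∀ j x, (D1 j x).1 = (D2 j x).1 := by
    intro j x
    have hs := congrArg Legal3NFA.step h
    have h1 := encNFA_step_eval u1 v1 (fun i x => (D1 i x).1) hu1 huv1 (fun i x => (D1 i x).2) j x
    have h2 := encNFA_step_eval u1 v1 (fun i x => (D2 i x).1) hu2 huv2 (fun i x => (D2 i x).2) j x
    have heq : {T | ∃ k ∈ (D1 j x).1, T = stL u1 v1 k} = {T | ∃ k ∈ (D2 j x).1, T = stL u1 v1 k} := by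
      rw [← h1, ← h2]
      exact congrFun (congrFun hs (stL u1 v1 j)) x
    ext k
    constructor
    · intro hk
      have : stL u1 v1 k ∈ {T | ∃ k' ∈ (D2 j x).1, T = stL u1 v1 k'} := heq ▸ ⟨k, hk, rfl⟩
      obtain ⟨k', hk', hkk⟩ := this
      exact (stL_inj hu1 huv1 hkk) ▸ hk'
    · intro hk
      have : stL u1 v1 k ∈ {T | ∃ k' ∈ (D1 j x).1, T = stL u1 v1 k'} := heq.symm ▸ ⟨k, hk, rfl⟩
      obtain ⟨k', hk', hkk⟩ := this
      exact (stL_inj hu1 huv1 hkk) ▸ hk'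
  have hD : D1 = D2 := funext fun j => funext fun x => Subtype.ext (hsp j x)
  exact Sigma.ext rfl (heq_of_eq hD)

lemma toLang_st7_zero : toLang (st7 0) = {LA} := stL_zero 0 0

lemma exists_st7_toLang {S : Set (Language (Fin 2))} (hne : S.Nonempty) (hsub : S ⊆ atomSet3) :
    ∃ k : Fin 7, toLang (st7 k) = S := by
  have hmem : ∀ j, j ∈ (Set.toFinite {j : Fin 3 | atomF j ∈ S}).toFinset ↔ atomF j ∈ S :=
    fun j => Set.Finite.mem_toFinset _
  set s : Finset (Fin 3) := (Set.toFinite {j : Fin 3 | atomF j ∈ S}).toFinset with hsdef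
  have htl : toLang s = S := by
    ext Y; rw [mem_toLang]
    constructor
    · rintro ⟨j, hj, rfl⟩; exact (hmem j).mp hj
    · intro hY
      obtain ⟨j, rfl⟩ := mem_atomSet3_iff.mp (hsub hY)
      exact ⟨j, (hmem j).mpr hY, rfl⟩
  have hsne : s.Nonempty := by
    obtain ⟨Y, hY⟩ := hne
    obtain ⟨j, rfl⟩ := mem_atomSet3_iff.mp (hsub hY)
    exact ⟨j, (hmem j).mpr hY⟩
  obtain ⟨k, hk⟩ := st7_surj s hsne
  exact ⟨k, hk ▸ htl⟩

lemma states_decomp (N : Legal3NFA) :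
    ∃ u v : Fin 7, 0 < u ∧ u < v ∧ N.states = Set.range (stL u v) := by
  obtain ⟨a, b, c, hab, hac, hbc, habc⟩ := Set.ncard_eq_three.mp N.card_states
  have hLA := N.sA_mem
  rw [habc] at hLA
  have hdec : ∃ S T : Set (Language (Fin 2)), S ≠ T ∧ S ≠ {LA} ∧ T ≠ {LA} ∧
      N.states = {{LA}, S, T} := by
    rcases hLA with h | h | h
    · subst h
      exact ⟨b, c, hbc, Ne.symm hab, Ne.symm hac, habc⟩
    · rw [← h] at habc hab hbc
      exact ⟨a, c, hac, hab, Ne.symm hbc, by rw [habc, Set.insert_comm]⟩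
    · rw [← h] at habc hac hbc
      refine ⟨a, b, hab, hac, hbc, ?_⟩
      rw [habc]
      ext X
      simp only [Set.mem_insert_iff, Set.mem_singleton_iff]
      tauto
  obtain ⟨S, T, hST, hSL, hTL, hdec⟩ := hdec
  have hSmem : S ∈ N.states := by rw [hdec]; exact Or.inr (Or.inl rfl)
  have hTmem : T ∈ N.states := by rw [hdec]; exact Or.inr (Or.inr rfl)
  have hS := N.states_atoms S hSmem
  have hT := N.states_atoms T hTmem
  obtain ⟨k1, hk1⟩ := exists_st7_toLang hS.1 hS.2
  obtain ⟨k2, hk2⟩ := exists_st7_toLang hT.1 hT.2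
  have hk10 : k1 ≠ 0 := by rintro rfl; exact hSL (by rw [← hk1, toLang_st7_zero])
  have hk20 : k2 ≠ 0 := by rintro rfl; exact hTL (by rw [← hk2, toLang_st7_zero])
  have hk12 : k1 ≠ k2 := fun h => hST (by rw [← hk1, ← hk2, h])
  rcases lt_or_gt_of_ne hk12 with hlt | hgt
  · refine ⟨k1, k2, Fin.pos_of_ne_zero hk10, hlt, ?_⟩
    rw [range_stL, hdec, ← hk1, ← hk2, toLang_st7_zero]
  · refine ⟨k2, k1, Fin.pos_of_ne_zero hk20, hgt, ?_⟩
    rw [range_stL, hdec, ← hk1, ← hk2, toLang_st7_zero, Set.pair_comm]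

lemma enc_surj : Function.Surjective encToLegal := by
  intro N
  obtain ⟨u, v, hu, huv, hst⟩ := states_decomp N
  have hdmem : ∀ (j : Fin 3) (x : Fin 2) (k : Fin 3),
      k ∈ (Set.toFinite {k : Fin 3 | stL u v k ∈ N.step (stL u v j) x}).toFinset ↔
        stL u v k ∈ N.step (stL u v j) x := fun j x k => Set.Finite.mem_toFinset _
  set d : Fin 3 → Fin 2 → Finset (Fin 3) :=
    fun j x => (Set.toFinite {k : Fin 3 | stL u v k ∈ N.step (stL u v j) x}).toFinset with hdd
  have hstepj : ∀ j x, N.step (stL u v j) x = {T | ∃ k ∈ d j x, T = stL u v k} := by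
    intro j x
    ext T
    constructor
    · intro hT
      have hTs : T ∈ N.states := N.step_mem _ x hT
      rw [hst] at hTs
      obtain ⟨k, rfl⟩ := hTs
      exact ⟨k, (hdmem j x k).mpr hT, rfl⟩
    · rintro ⟨k, hk, rfl⟩
      exact (hdmem j x k).mp hk
  have hd : ∀ j x, (d j x).biUnion (stOf u v) = tgt (stOf u v j) x := by
    intro j x
    apply toLang_inj
    rw [toLang_biUnion, ← alphaStepSet_toLang]
    have hc := N.cond_step (stL u v j) (hst ▸ Set.mem_range_self j) x
    rw [hstepj j x] at hc
    show (⋃ k ∈ d j x, stL u v k) = alphaStepSet (stL u v j) x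
    rw [← hc]
    ext w
    simp only [Set.mem_iUnion, Set.mem_setOf_eq]
    constructor
    · rintro ⟨k, hk, hw⟩; exact ⟨stL u v k, ⟨k, hk, rfl⟩, hw⟩
    · rintro ⟨T, ⟨k, hk, rfl⟩, hw⟩; exact ⟨k, hk, hw⟩
  refine ⟨⟨⟨(u, v), hu, huv⟩, fun i x => ⟨d i x, hd i x⟩⟩, ?_⟩
  apply legal_ext
  · exact hst.symm
  · funext S x
    by_cases hS : S ∈ N.states
    · rw [hst] at hS
      obtain ⟨j, rfl⟩ := hS
      show {T | ∃ j', stL u v j = stL u v j' ∧ ∃ k ∈ d j' x, T = stL u v k} =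
        N.step (stL u v j) x
      rw [hstepj j x]
      ext T
      constructor
      · rintro ⟨j', hj', hk⟩
        exact (stL_inj hu huv hj') ▸ hk
      · intro h; exact ⟨j, rfl, h⟩
    · rw [N.step_out S hS x]
      ext T
      simp only [Set.mem_setOf_eq, Set.mem_empty_iff_false, iff_false]
      rintro ⟨j, rfl, -⟩
      exact hS (hst ▸ Set.mem_range_self j)
  · show {stL u v 0} = N.start
    rw [N.start_eq, stL_zero]
  · show {S | S ∈ Set.range (stL u v) ∧ LC ∈ S} = N.accept
    ext S
    simp only [Set.mem_setOf_eq]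
    constructor
    · rintro ⟨h1, h2⟩
      exact (N.cond_fin S (by rw [hst]; exact h1)).mpr h2
    · intro h
      have h1 := N.accept_sub h
      exact ⟨by rw [← hst]; exact h1, (N.cond_fin S h1).mp h⟩

lemma card_legal : Nat.card Legal3NFA = 281 := by
  rw [← Nat.card_eq_of_bijective encToLegal ⟨enc_inj, enc_surj⟩, Nat.card_eq_fintype_card,
    card_Enc]

/-- The language `L = Σ*abΣ*` has exactly 281 minimal atomic NFAs: its atoms
are exactly `A = Σ*abΣ*`, `B = b*ba*`, `C = a*`; every atomic NFA accepting `L` has at least 3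
states; there are exactly 281 three-state NFAs as in the Legality characterization; and each of
them is a reduced atomic NFA accepting `L`. -/
theorem lab_281_minimal_atomic_nfas :
    (∀ X : Language (Fin 2), IsAtomOf LA X ↔ X ∈ atomSet3) ∧
    (∀ (σ : Type) (_ : Finite σ) (M : NFA (Fin 2) σ), M.accepts = LA → M.IsAtomic →
      3 ≤ Nat.card σ) ∧
    Nat.card Legal3NFA = 281 ∧
    (∀ N : Legal3NFA, N.toNFA.accepts = LA ∧ N.toNFA.IsReduced ∧ N.toNFA.IsAtomic) := by
  exact ⟨atoms_LA, atomic_nfa_min_states, card_legal,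
    fun N => ⟨N.accepts_eq, N.reduced, N.atomic⟩⟩
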